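/- The number of pairs of twins among permutations of [n] equals (n−1)!, and the double edges of the cluster graph decompose into exactly (n−2)! vertex-disjoint directed cycles, each of length n−1. -/

import Mathlib

/-- `reduce w` replaces each copy of the i-th smallest value of `w` by `i`. -/
def reduce {m : ℕ} (w : Fin m → ℕ) : Fin m → ℕ :=
  fun i => ((Finset.univ.image w).filter (fun v => v ≤ w i)).card

/-- The first `n-1` letters of a word of length `n`. -/
def firstw {n : ℕ} (w : Fin n → ℕ) : Fin (n - 1) → ℕ :=
  fun i => w (Fin.castLE (Nat.sub_le n 1) i)

/-- The last `n-1` letters of a word of length `n`. -/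
def lastw {n : ℕ} (w : Fin n → ℕ) : Fin (n - 1) → ℕ :=
  fun i => w ⟨i.val + 1, by have := i.isLt; omega⟩

/-- The word (with letters in `{1,…,n}`) associated with a permutation of `[n]`. -/
def permWord {n : ℕ} (x : Equiv.Perm (Fin n)) : Fin n → ℕ := fun i => (x i : ℕ) + 1

/-- The word of a permutation of `[n-1]` indexing a cluster. -/
def clusterWord {n : ℕ} (σ : Equiv.Perm (Fin (n - 1))) : Fin (n - 1) → ℕ :=
  fun i => (σ i : ℕ) + 1

/-- `x` is an edge of the cluster graph from `σ` to `τ`: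
`reduce(x₁⋯x_{n-1}) = σ` and `reduce(x₂⋯x_n) = τ`. -/
def isEdge {n : ℕ} (x : Equiv.Perm (Fin n)) (σ τ : Equiv.Perm (Fin (n - 1))) : Prop :=
  reduce (firstw (permWord x)) = clusterWord σ ∧ reduce (lastw (permWord x)) = clusterWord τ

/-- `x` is a permutation whose first and last entries differ by 1. -/
def isTwinEnd {n : ℕ} (hn : 2 ≤ n) (x : Equiv.Perm (Fin n)) : Prop :=
  (x ⟨0, by omega⟩ : ℕ) + 1 = x ⟨n - 1, by omega⟩ ∨
    (x ⟨n - 1, by omega⟩ : ℕ) + 1 = x ⟨0, by omega⟩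

variable {m : ℕ}

lemma reduce_apply {k : ℕ} (w : Fin k → ℕ) (hw : Function.Injective w) (i : Fin k) :
    reduce w i = (Finset.univ.filter (fun j => w j ≤ w i)).card := by
  unfold reduce
  rw [Finset.filter_image, Finset.card_image_of_injective _ hw]

lemma card_le_perm (σ : Equiv.Perm (Fin (m+1))) (i : Fin (m+1)) :
    (Finset.univ.filter (fun j => (σ j : ℕ) ≤ (σ i : ℕ))).card = (σ i : ℕ) + 1 := by
  rw [← Fin.card_Iic (σ i)]
  apply Finset.card_bij (fun j _ => σ j)
  · intro a ha; simp only [Finset.mem_filter] at ha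
    simp [Finset.mem_Iic, Fin.le_def, ha.2]
  · intro a _ b _ h; exact σ.injective h
  · intro b hb
    refine ⟨σ.symm b, ?_, by simp⟩
    simp only [Finset.mem_filter, Finset.mem_univ, true_and, Equiv.apply_symm_apply]
    exact Fin.le_def.mp (Finset.mem_Iic.mp hb)

lemma reduce_eq_clusterWord_iff (w : Fin (m+1) → ℕ) (hw : Function.Injective w)
    (σ : Equiv.Perm (Fin (m+1))) :
    reduce w = clusterWord (n := m+2) σ ↔ ∀ i j, (w i ≤ w j ↔ (σ i : ℕ) ≤ (σ j : ℕ)) := by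
  constructor
  · intro h i j
    have hi := congrFun h i; have hj := congrFun h j
    rw [reduce_apply w hw] at hi hj
    simp only [clusterWord] at hi hj
    constructor
    · intro hle
      have hsub : Finset.univ.filter (fun k => w k ≤ w i) ⊆
          Finset.univ.filter (fun k => w k ≤ w j) := by
        intro k hk; simp only [Finset.mem_filter] at *; exact ⟨hk.1, le_trans hk.2 hle⟩
      have := Finset.card_le_card hsub
      omega
    · intro hle
      by_contra hc
      push_neg at hc
      have hsub : Finset.univ.filter (fun k => w k ≤ w j) ⊂
          Finset.univ.filter (fun k => w k ≤ w i) := by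
        constructor
        · intro k hk; simp only [Finset.mem_filter] at *
          exact ⟨hk.1, le_trans hk.2 (le_of_lt hc)⟩
        · intro hsub'
          have := hsub' (Finset.mem_filter.mpr ⟨Finset.mem_univ i, le_refl _⟩)
          simp only [Finset.mem_filter] at this
          omega
      have := Finset.card_lt_card hsub
      omega
  · intro h
    funext i
    rw [reduce_apply w hw]
    show _ = (σ i : ℕ) + 1
    rw [← card_le_perm σ i]
    congr 1
    ext k
    simp [h k i]

lemma clusterWord_injective {n : ℕ} {σ τ : Equiv.Perm (Fin (n-1))}
    (h : clusterWord σ = clusterWord τ) : σ = τ := by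
  apply Equiv.ext
  intro i
  have := congrFun h i
  simp only [clusterWord] at this
  exact Fin.ext (by omega)

lemma exists_perm_pattern (w : Fin (m+1) → ℕ) (hw : Function.Injective w) :
    ∃ σ : Equiv.Perm (Fin (m+1)), ∀ i j, (w i ≤ w j ↔ (σ i : ℕ) ≤ (σ j : ℕ)) := by
  have hcard : (Finset.univ.image w).card = m + 1 := by
    rw [Finset.card_image_of_injective _ hw, Finset.card_univ, Fintype.card_fin]
  let e := (Finset.univ.image w).orderIsoOfFin hcard
  let g : Fin (m+1) → Fin (m+1) := fun i => e.symm ⟨w i, by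
    exact Finset.mem_image_of_mem w (Finset.mem_univ i)⟩
  have hg : Function.Injective g := by
    intro i j hij
    apply hw
    have := e.symm.injective hij
    exact congrArg Subtype.val this
  refine ⟨Equiv.ofBijective g (Finite.injective_iff_bijective.mp hg), ?_⟩
  intro i j
  show w i ≤ w j ↔ (g i : ℕ) ≤ (g j : ℕ)
  rw [← Fin.le_def]
  show _ ↔ e.symm ⟨w i, _⟩ ≤ e.symm ⟨w j, _⟩
  rw [e.symm.le_iff_le, Subtype.mk_le_mk]

def mkPerm (p : Fin (m+2)) (σ : Equiv.Perm (Fin (m+1))) : Equiv.Perm (Fin (m+2)) :=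
  finSuccEquivLast.trans ((σ.optionCongr).trans (finSuccEquiv' p).symm)

@[simp] lemma mkPerm_castSucc (p : Fin (m+2)) (σ : Equiv.Perm (Fin (m+1))) (i : Fin (m+1)) :
    mkPerm p σ i.castSucc = p.succAbove (σ i) := by
  simp [mkPerm]

@[simp] lemma mkPerm_last (p : Fin (m+2)) (σ : Equiv.Perm (Fin (m+1))) :
    mkPerm p σ (Fin.last (m+1)) = p := by
  simp [mkPerm]

lemma firstw_injective (x : Equiv.Perm (Fin (m+2))) :
    Function.Injective (firstw (permWord x)) := by
  intro i j h
  simp only [firstw, permWord] at h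
  have := x.injective (Fin.ext (by omega : ((x (Fin.castLE _ i)) : ℕ) = x (Fin.castLE _ j)))
  exact Fin.ext (by simpa [Fin.ext_iff] using this)

lemma lastw_injective (x : Equiv.Perm (Fin (m+2))) :
    Function.Injective (lastw (permWord x)) := by
  intro i j h
  simp only [lastw, permWord] at h
  have := x.injective (Fin.ext (by omega : ((x ⟨i.val+1,_⟩) : ℕ) = x ⟨j.val+1,_⟩))
  exact Fin.ext (by simpa [Fin.ext_iff] using this)

lemma cluster_apply (x : Equiv.Perm (Fin (m+2))) (σ : Equiv.Perm (Fin (m+1)))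
    (h : ∀ i j : Fin (m+1), ((x i.castSucc : ℕ) ≤ (x j.castSucc : ℕ) ↔ (σ i : ℕ) ≤ (σ j : ℕ)))
    (i : Fin (m+1)) :
    x i.castSucc = (x (Fin.last (m+1))).succAbove (σ i) := by
  set p := x (Fin.last (m+1)) with hp
  set v : Fin (m+1) → Fin (m+2) := fun i => x (Fin.castSucc (σ.symm i)) with hv
  have hvmono : StrictMono v := by
    intro i j hij
    have h2 := h (σ.symm i) (σ.symm j)
    simp only [Equiv.apply_symm_apply] at h2
    have hle : (v i : ℕ) ≤ v j := h2.mpr (le_of_lt (Fin.lt_def.mp hij))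
    have hne : v i ≠ v j := by
      intro he
      have := σ.symm.injective (Fin.castSucc_injective _ (x.injective he))
      exact absurd this (ne_of_lt hij)
    exact Fin.lt_def.mpr (lt_of_le_of_ne hle (fun hc => hne (Fin.ext hc)))
  have hrange : Set.range v = Set.range p.succAbove := by
    rw [Fin.range_succAbove]
    ext b
    simp only [Set.mem_range, Set.mem_compl_iff, Set.mem_singleton_iff]
    constructor
    · rintro ⟨k, rfl⟩
      intro he
      have := x.injective he
      exact absurd this (Fin.ne_last_of_lt (Fin.castSucc_lt_last _))
    · intro hb
      have hne : x.symm b ≠ Fin.last (m+1) := by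
        intro he
        apply hb
        rw [← x.apply_symm_apply b, he]
      obtain ⟨k, hk⟩ := Fin.exists_castSucc_eq.mpr hne
      exact ⟨σ k, by simp [hv, hk]⟩
  haveI : WellFoundedLT (Fin (m+1)) := inferInstance
  have heq := (StrictMono.range_inj (f := v) (g := p.succAbove) hvmono
    (Fin.strictMono_succAbove p)).mp hrange
  have := congrFun heq (σ i)
  simpa [hv] using this

lemma cluster_iff (x : Equiv.Perm (Fin (m+2))) (σ : Equiv.Perm (Fin (m+1))) :
    reduce (firstw (permWord x)) = clusterWord (n := m+2) σ ↔
      ∀ i : Fin (m+1), x i.castSucc = (x (Fin.last (m+1))).succAbove (σ i) := by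
  rw [reduce_eq_clusterWord_iff _ (firstw_injective x) σ]
  constructor
  · intro h
    apply cluster_apply x σ
    intro i j
    have := h i j
    simp only [firstw, permWord] at this
    rw [show (Fin.castLE (Nat.sub_le (m+2) 1) i) = i.castSucc from rfl,
        show (Fin.castLE (Nat.sub_le (m+2) 1) j) = j.castSucc from rfl] at this
    constructor
    · intro hle; exact this.mp (by omega)
    · intro hle; have := this.mpr hle; omega
  · intro h i j
    simp only [firstw, permWord]
    rw [show (Fin.castLE (Nat.sub_le (m+2) 1) i) = i.castSucc from rfl,
        show (Fin.castLE (Nat.sub_le (m+2) 1) j) = j.castSucc from rfl, h i, h j]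
    have hiff := @Fin.succAbove_le_succAbove_iff (m+1) (x (Fin.last (m+1))) (σ i) (σ j)
    rw [Fin.le_def, Fin.le_def] at hiff
    omega

lemma twinEnd_iff (x : Equiv.Perm (Fin (m+2))) (σ : Equiv.Perm (Fin (m+1)))
    (hx : ∀ i : Fin (m+1), x i.castSucc = (x (Fin.last (m+1))).succAbove (σ i)) :
    isTwinEnd (n := m+2) (by omega) x ↔
      (x (Fin.last (m+1)) = (σ 0).castSucc ∨ x (Fin.last (m+1)) = (σ 0).succ) := by
  set p := x (Fin.last (m+1)) with hp
  have h0 : x ⟨0, by omega⟩ = p.succAbove (σ 0) := by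
    rw [show (⟨0, by omega⟩ : Fin (m+2)) = (Fin.castSucc (0 : Fin (m+1))) from rfl]
    exact hx 0
  have hlast : x ⟨m+2-1, by omega⟩ = p := by
    rw [show (⟨m+2-1, by omega⟩ : Fin (m+2)) = Fin.last (m+1) from rfl]
  unfold isTwinEnd
  rw [h0, hlast]
  rcases lt_or_ge (Fin.castSucc (σ 0)) p with hc | hc
  · rw [Fin.succAbove_of_castSucc_lt _ _ hc]
    have hcv := Fin.lt_def.mp hc
    simp only [Fin.coe_castSucc] at hcv
    constructor
    · rintro (h | h)
      · right
        apply Fin.ext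
        simp only [Fin.val_succ]
        simpa using h.symm
      · left
        exfalso
        simp only [Fin.coe_castSucc] at h
        omega
    · rintro (h | h)
      · exfalso
        rw [h] at hcv
        simp at hcv
      · left
        rw [h]
        simp
  · rw [Fin.succAbove_of_le_castSucc _ _ hc]
    have hcv := Fin.le_def.mp hc
    simp only [Fin.coe_castSucc] at hcv
    constructor
    · rintro (h | h)
      · exfalso
        simp only [Fin.val_succ] at h
        omega
      · left
        apply Fin.ext
        simp only [Fin.coe_castSucc]
        simp only [Fin.val_succ] at h
        omega
    · rintro (h | h)
      · right
        rw [h]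
        simp
      · exfalso
        rw [h] at hcv
        simp at hcv

lemma succAbove_pivot_pair (a v : Fin (m+1)) (hva : v ≠ a) :
    (Fin.castSucc a).succAbove v = (a.succ).succAbove v := by
  rcases Nat.lt_or_ge v.val a.val with h | h
  · rw [Fin.succAbove_of_castSucc_lt _ _
        (Fin.lt_def.mpr (by simp only [Fin.coe_castSucc]; omega)),
      Fin.succAbove_of_castSucc_lt _ _
        (Fin.lt_def.mpr (by simp only [Fin.coe_castSucc, Fin.val_succ]; omega))]
  · have : a.val < v.val := by
      rcases Nat.lt_or_ge a.val v.val with h' | h'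
      · exact h'
      · exact absurd (Fin.ext (by omega : v.val = a.val)) hva
    rw [Fin.succAbove_of_le_castSucc _ _
        (Fin.le_def.mpr (by simp only [Fin.coe_castSucc]; omega)),
      Fin.succAbove_of_le_castSucc _ _
        (Fin.le_def.mpr (by simp only [Fin.coe_castSucc, Fin.val_succ]; omega))]

lemma lastw_values (x : Equiv.Perm (Fin (m+2))) (σ : Equiv.Perm (Fin (m+1)))
    (hx : ∀ i : Fin (m+1), x i.castSucc = (x (Fin.last (m+1))).succAbove (σ i))
    (hp : x (Fin.last (m+1)) = (σ 0).castSucc ∨ x (Fin.last (m+1)) = (σ 0).succ) :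
    ∃ q : Fin (m+2), ∀ i : Fin (m+1),
      x i.succ = q.succAbove ((σ * Equiv.addRight (1 : Fin (m+1))) i) := by
  have key : ∀ q : Fin (m+2),
      (x (Fin.last (m+1))) = q.succAbove (σ 0) →
      (∀ v : Fin (m+1), v ≠ σ 0 →
        (x (Fin.last (m+1))).succAbove v = q.succAbove v) →
      ∀ i : Fin (m+1), x i.succ = q.succAbove ((σ * Equiv.addRight (1 : Fin (m+1))) i) := by
    intro q hq hq2 i
    have happ : (σ * Equiv.addRight (1 : Fin (m+1))) i = σ (i + 1) := rfl
    rw [happ]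
    by_cases hi : i = Fin.last m
    · subst hi
      rw [Fin.succ_last, Fin.last_add_one]
      exact hq
    · have hiv : i.val < m := by
        rcases Nat.lt_or_ge i.val m with h' | h'
        · exact h'
        · refine absurd (Fin.ext ?_) hi
          simp only [Fin.val_last]
          have := i.isLt
          omega
      have hadd : (i + 1 : Fin (m+1)).val = i.val + 1 := by
        rw [Fin.val_add_one, if_neg hi]
      have hsucc : i.succ = Fin.castSucc (i + 1) := Fin.ext (by simp [hadd])
      rw [hsucc, hx (i + 1)]
      apply hq2
      intro he
      have := σ.injective he
      rw [Fin.ext_iff, hadd] at this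
      simp at this
  obtain hp | hp := hp
  · refine ⟨(σ 0).succ, key _ ?_ ?_⟩
    · rw [hp, Fin.succAbove_succ_self]
    · intro v hv
      rw [hp]
      exact succAbove_pivot_pair _ _ hv
  · refine ⟨(σ 0).castSucc, key _ ?_ ?_⟩
    · rw [hp, Fin.succAbove_castSucc_self]
    · intro v hv
      rw [hp]
      exact (succAbove_pivot_pair _ _ hv).symm

lemma lastw_cluster (x : Equiv.Perm (Fin (m+2))) (τ : Equiv.Perm (Fin (m+1))) (q : Fin (m+2))
    (h : ∀ i : Fin (m+1), x i.succ = q.succAbove (τ i)) :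
    reduce (lastw (permWord x)) = clusterWord (n := m+2) τ := by
  rw [reduce_eq_clusterWord_iff _ (lastw_injective x) τ]
  intro i j
  have hi : lastw (permWord x) i = (x i.succ : ℕ) + 1 := rfl
  have hj : lastw (permWord x) j = (x j.succ : ℕ) + 1 := rfl
  rw [hi, hj, h i, h j]
  have hiff := @Fin.succAbove_le_succAbove_iff (m+1) q (τ i) (τ j)
  rw [Fin.le_def, Fin.le_def] at hiff
  omega

open Fin.NatCast

def cyc (m : ℕ) : Equiv.Perm (Fin (m+1)) := Equiv.addRight (1 : Fin (m+1))

lemma cyc_pow_apply (k : ℕ) (i : Fin (m+1)) : ((cyc m) ^ k) i = i + (k : Fin (m+1)) := by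
  induction k with
  | zero => simp
  | succ k ih =>
    rw [pow_succ', Equiv.Perm.mul_apply, ih]
    show (i + (k : Fin (m+1))) + 1 = i + ((k + 1 : ℕ) : Fin (m+1))
    push_cast
    rw [add_assoc]

lemma cyc_pow_eq_one_iff (k : ℕ) : (cyc m) ^ k = 1 ↔ (m+1) ∣ k := by
  constructor
  · intro h
    have := congrArg (fun p : Equiv.Perm (Fin (m+1)) => p 0) h
    simp only [cyc_pow_apply, Equiv.Perm.one_apply, zero_add] at this
    exact Fin.natCast_eq_zero.mp this
  · intro hd
    apply Equiv.ext
    intro i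
    simp only [cyc_pow_apply, Equiv.Perm.one_apply, Fin.natCast_eq_zero.mpr hd, add_zero]

lemma mulRight_pow_apply (c : Equiv.Perm (Fin (m+1))) (k : ℕ) (σ : Equiv.Perm (Fin (m+1))) :
    ((Equiv.mulRight c) ^ k) σ = σ * c ^ k := by
  induction k generalizing σ with
  | zero => simp
  | succ k ih =>
    rw [pow_succ, Equiv.Perm.mul_apply, show (Equiv.mulRight c) σ = σ * c from rfl, ih (σ * c),
      pow_succ', ← mul_assoc]

lemma mkPerm_firstw (p : Fin (m+2)) (σ : Equiv.Perm (Fin (m+1))) :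
    reduce (firstw (permWord (mkPerm p σ))) = clusterWord (n := m+2) σ := by
  apply (cluster_iff _ _).mpr
  intro i
  rw [mkPerm_castSucc, mkPerm_last]

lemma eq_mkPerm (x : Equiv.Perm (Fin (m+2))) (σ : Equiv.Perm (Fin (m+1)))
    (hx : ∀ i : Fin (m+1), x i.castSucc = (x (Fin.last (m+1))).succAbove (σ i)) :
    x = mkPerm (x (Fin.last (m+1))) σ := by
  apply Equiv.ext
  intro i
  induction i using Fin.lastCases with
  | last => rw [mkPerm_last]
  | cast i => rw [mkPerm_castSucc]; exact hx i

lemma mkPerm_twinEnd (p : Fin (m+2)) (σ : Equiv.Perm (Fin (m+1)))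
    (hp : p = (σ 0).castSucc ∨ p = (σ 0).succ) :
    isTwinEnd (n := m+2) (by omega) (mkPerm p σ) := by
  apply (twinEnd_iff (mkPerm p σ) σ (fun i => by rw [mkPerm_castSucc, mkPerm_last])).mpr
  rw [mkPerm_last]
  exact hp

lemma cluster_twin_lastw (x : Equiv.Perm (Fin (m+2))) (σ : Equiv.Perm (Fin (m+1)))
    (hcl : reduce (firstw (permWord x)) = clusterWord (n := m+2) σ)
    (htw : isTwinEnd (n := m+2) (by omega) x) :
    reduce (lastw (permWord x)) = clusterWord (n := m+2) (σ * cyc m) := by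
  have hx := (cluster_iff x σ).mp hcl
  have hp := (twinEnd_iff x σ hx).mp htw
  obtain ⟨q, hq⟩ := lastw_values x σ hx hp
  exact lastw_cluster x (σ * cyc m) q hq

lemma cluster_twin_classify (x : Equiv.Perm (Fin (m+2))) (σ : Equiv.Perm (Fin (m+1)))
    (hcl : reduce (firstw (permWord x)) = clusterWord (n := m+2) σ)
    (htw : isTwinEnd (n := m+2) (by omega) x) :
    x = mkPerm ((σ 0).castSucc) σ ∨ x = mkPerm ((σ 0).succ) σ := by
  have hx := (cluster_iff x σ).mp hcl
  have hp := (twinEnd_iff x σ hx).mp htw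
  obtain hp | hp := hp
  · left; rw [← hp]; exact eq_mkPerm x σ hx
  · right; rw [← hp]; exact eq_mkPerm x σ hx

lemma mkPerm_ne (σ : Equiv.Perm (Fin (m+1))) :
    mkPerm ((σ 0).castSucc) σ ≠ mkPerm ((σ 0).succ) σ := by
  intro h
  have := congrArg (fun e : Equiv.Perm (Fin (m+2)) => e (Fin.last (m+1))) h
  simp only [mkPerm_last] at this
  have := congrArg Fin.val this
  simp only [Fin.coe_castSucc, Fin.val_succ] at this
  omega

def Rset (m : ℕ) : Finset (Equiv.Perm (Fin (m+1))) :=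
  Finset.univ.image (fun e : Equiv.Perm (Fin m) => Equiv.Perm.decomposeFin.symm (0, e))

lemma mem_Rset {ρ : Equiv.Perm (Fin (m+1))} : ρ ∈ Rset m ↔ ρ 0 = 0 := by
  constructor
  · intro h
    obtain ⟨e, _, rfl⟩ := Finset.mem_image.mp h
    exact Equiv.Perm.decomposeFin_symm_apply_zero 0 e
  · intro h
    apply Finset.mem_image.mpr
    refine ⟨(Equiv.Perm.decomposeFin ρ).2, Finset.mem_univ _, ?_⟩
    have h1 : Equiv.Perm.decomposeFin.symm (Equiv.Perm.decomposeFin ρ) = ρ :=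
      Equiv.symm_apply_apply _ _
    have h2 : (Equiv.Perm.decomposeFin ρ).1 = ρ 0 := by
      conv_rhs => rw [← h1]
      rw [show (Equiv.Perm.decomposeFin ρ) =
        ((Equiv.Perm.decomposeFin ρ).1, (Equiv.Perm.decomposeFin ρ).2) from rfl,
        Equiv.Perm.decomposeFin_symm_apply_zero]
    conv_rhs => rw [← h1]
    congr 1
    exact Prod.ext (by rw [h2, h]) rfl

lemma Rset_card : (Rset m).card = Nat.factorial m := by
  rw [Rset, Finset.card_image_of_injective, Finset.card_univ, Fintype.card_perm,
    Fintype.card_fin]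
  intro a b h
  have := Equiv.Perm.decomposeFin.symm.injective h
  exact congrArg Prod.snd this

/-- The number of pairs of twins among permutations of `[n]` is `(n-1)!`, and the
double edges of the cluster graph decompose into exactly `(n-2)!` vertex-disjoint
directed cycles, each of length `n-1`. -/
theorem twin_pairs_count_and_cycles (n : ℕ) (hn : 3 ≤ n) :
    Nat.card {p : Sym2 (Equiv.Perm (Fin n)) // ∃ x y : Equiv.Perm (Fin n),
        p = s(x, y) ∧ x ≠ y ∧
        reduce (firstw (permWord x)) = reduce (firstw (permWord y)) ∧
        isTwinEnd (by omega) x ∧ isTwinEnd (by omega) y} = Nat.factorial (n - 1) ∧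
    ∃ f : Equiv.Perm (Equiv.Perm (Fin (n - 1))),
      (∀ σ τ : Equiv.Perm (Fin (n - 1)),
        (∃ x y : Equiv.Perm (Fin n), x ≠ y ∧ isEdge x σ τ ∧ isEdge y σ τ ∧
          isTwinEnd (by omega) x ∧ isTwinEnd (by omega) y) ↔ f σ = τ) ∧
      (∀ σ, (f ^ (n - 1)) σ = σ ∧ ∀ m : ℕ, 0 < m → m < n - 1 → (f ^ m) σ ≠ σ) ∧
      ∃ R : Finset (Equiv.Perm (Fin (n - 1))), R.card = Nat.factorial (n - 2) ∧
        ∀ σ : Equiv.Perm (Fin (n - 1)),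
          ∃! ρ : Equiv.Perm (Fin (n - 1)), ρ ∈ R ∧ ∃ m : ℕ, m < n - 1 ∧ (f ^ m) ρ = σ := by
  obtain ⟨m, rfl⟩ : ∃ m, n = m + 2 := ⟨n - 2, by omega⟩
  simp only [show m + 2 - 1 = m + 1 from rfl, show m + 2 - 2 = m from rfl]
  constructor
  · -- counting part
    refine (Nat.card_eq_of_bijective
      (fun σ : Equiv.Perm (Fin (m+1)) =>
        (⟨s(mkPerm ((σ 0).castSucc) σ, mkPerm ((σ 0).succ) σ),
          mkPerm ((σ 0).castSucc) σ, mkPerm ((σ 0).succ) σ, rfl, mkPerm_ne σ,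
          (mkPerm_firstw _ _).trans (mkPerm_firstw _ _).symm,
          mkPerm_twinEnd _ _ (Or.inl rfl), mkPerm_twinEnd _ _ (Or.inr rfl)⟩ :
          {p : Sym2 (Equiv.Perm (Fin (m+2))) // ∃ x y : Equiv.Perm (Fin (m+2)),
            p = s(x, y) ∧ x ≠ y ∧
            reduce (firstw (permWord x)) = reduce (firstw (permWord y)) ∧
            isTwinEnd (by omega) x ∧ isTwinEnd (by omega) y}))
      ⟨?_, ?_⟩).symm.trans ?_
    · -- injective
      intro σ σ' h
      have hval := congrArg Subtype.val h
      simp only at hval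
      rw [Sym2.eq_iff] at hval
      obtain ⟨h1, _⟩ | ⟨h1, _⟩ := hval
      · apply clusterWord_injective (n := m+2)
        rw [← mkPerm_firstw ((σ 0).castSucc) σ, h1, mkPerm_firstw]
      · apply clusterWord_injective (n := m+2)
        rw [← mkPerm_firstw ((σ 0).castSucc) σ, h1, mkPerm_firstw]
    · -- surjective
      rintro ⟨p, x, y, rfl, hne, hsame, htx, hty⟩
      obtain ⟨σ, hσ⟩ := exists_perm_pattern (firstw (permWord x)) (firstw_injective x)
      have hclx : reduce (firstw (permWord x)) = clusterWord (n := m+2) σ :=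
        (reduce_eq_clusterWord_iff _ (firstw_injective x) σ).mpr hσ
      have hcly : reduce (firstw (permWord y)) = clusterWord (n := m+2) σ := by
        rw [← hsame]; exact hclx
      have hx := cluster_twin_classify x σ hclx htx
      have hy := cluster_twin_classify y σ hcly hty
      refine ⟨σ, Subtype.ext ?_⟩
      simp only
      obtain hx | hx := hx <;> obtain hy | hy := hy
      · exact absurd (hx.trans hy.symm) hne
      · rw [hx, hy]
      · rw [hx, hy]; exact Sym2.eq_swap
      · exact absurd (hx.trans hy.symm) hne
    · rw [Nat.card_eq_fintype_card, Fintype.card_perm, Fintype.card_fin]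
  · refine ⟨Equiv.mulRight (cyc m), ?_, ?_, ?_⟩
    · -- edge characterization
      show ∀ σ τ : Equiv.Perm (Fin (m+1)),
        (∃ x y : Equiv.Perm (Fin (m+2)), x ≠ y ∧ isEdge x σ τ ∧ isEdge y σ τ ∧
          isTwinEnd (by omega) x ∧ isTwinEnd (by omega) y) ↔ (Equiv.mulRight (cyc m)) σ = τ
      intro σ τ
      constructor
      · rintro ⟨x, y, hxy, ⟨hx1, hx2⟩, _, htx, _⟩
        have h1 := cluster_twin_lastw x σ hx1 htx
        rw [hx2] at h1
        have := clusterWord_injective (n := m+2) h1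
        rw [this]
        rfl
      · intro h
        have hτ : τ = σ * cyc m := by rw [← h]; rfl
        refine ⟨mkPerm ((σ 0).castSucc) σ, mkPerm ((σ 0).succ) σ, mkPerm_ne σ,
          ⟨mkPerm_firstw _ _, ?_⟩, ⟨mkPerm_firstw _ _, ?_⟩,
          mkPerm_twinEnd _ _ (Or.inl rfl), mkPerm_twinEnd _ _ (Or.inr rfl)⟩
        · rw [hτ]
          exact cluster_twin_lastw _ σ (mkPerm_firstw _ _) (mkPerm_twinEnd _ _ (Or.inl rfl))
        · rw [hτ]
          exact cluster_twin_lastw _ σ (mkPerm_firstw _ _) (mkPerm_twinEnd _ _ (Or.inr rfl))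
    · -- cycle lengths
      show ∀ σ : Equiv.Perm (Fin (m+1)),
        ((Equiv.mulRight (cyc m)) ^ (m+1)) σ = σ ∧
          ∀ k : ℕ, 0 < k → k < m+1 → ((Equiv.mulRight (cyc m)) ^ k) σ ≠ σ
      intro σ
      constructor
      · rw [mulRight_pow_apply, (cyc_pow_eq_one_iff (m+1)).mpr (dvd_refl _), mul_one]
      · intro k hk1 hk2 hcontra
        rw [mulRight_pow_apply] at hcontra
        have hone : (cyc m) ^ k = 1 := by
          apply mul_left_cancel (a := σ)
          rw [hcontra, mul_one]
        have hdvd := (cyc_pow_eq_one_iff k).mp hone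
        have := Nat.le_of_dvd hk1 hdvd
        omega
    · -- representatives
      show ∃ R : Finset (Equiv.Perm (Fin (m+1))), R.card = Nat.factorial m ∧
        ∀ σ : Equiv.Perm (Fin (m+1)), ∃! ρ : Equiv.Perm (Fin (m+1)),
          ρ ∈ R ∧ ∃ k : ℕ, k < m+1 ∧ ((Equiv.mulRight (cyc m)) ^ k) ρ = σ
      refine ⟨Rset m, Rset_card, ?_⟩
      intro σ
      set t := σ.symm 0 with ht
      set j := (m + 1 - t.val) % (m+1) with hj
      have hjlt : j < m+1 := Nat.mod_lt _ (by omega)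
      have hjcast : (j : Fin (m+1)) = -t := by
        apply Fin.ext
        rw [Fin.val_natCast, Nat.mod_eq_of_lt hjlt, Fin.neg_def]
      have hinv : ∀ k : ℕ, ((cyc m) ^ k)⁻¹ 0 = -(k : Fin (m+1)) := by
        intro k
        apply ((cyc m) ^ k).injective
        rw [← Equiv.Perm.mul_apply, mul_inv_cancel, Equiv.Perm.one_apply, cyc_pow_apply, neg_add_cancel]
      refine ⟨σ * ((cyc m) ^ j)⁻¹, ⟨?_, j, by omega, ?_⟩, ?_⟩
      · apply mem_Rset.mpr
        rw [Equiv.Perm.mul_apply, hinv, hjcast, neg_neg, ht, Equiv.apply_symm_apply]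
      · rw [mulRight_pow_apply, inv_mul_cancel_right]
      · rintro ρ ⟨hρR, k, hk, hfk⟩
        rw [mulRight_pow_apply] at hfk
        have hρ : ρ = σ * ((cyc m) ^ k)⁻¹ := by rw [← hfk, mul_inv_cancel_right]
        have h0 : ρ 0 = 0 := mem_Rset.mp hρR
        rw [hρ, Equiv.Perm.mul_apply] at h0
        have h1 : ((cyc m) ^ k)⁻¹ 0 = t := by
          have := congrArg σ.symm h0
          rw [Equiv.symm_apply_apply] at this
          rw [this, ht]
        have h3 : (k : Fin (m+1)) = (j : Fin (m+1)) := by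
          rw [hjcast, ← h1, hinv, neg_neg]
        have hk_eq : k = j := by
          have := congrArg Fin.val h3
          rw [Fin.val_natCast, Fin.val_natCast, Nat.mod_eq_of_lt (by omega : k < m+1),
            Nat.mod_eq_of_lt hjlt] at this
          exact this
        rw [hρ, hk_eq]
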